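/- For every g ∈ ℝ^T, the collection {A*(f) : f is an optimal super-reparametrization of g} equals {A ⊆ T : OPT(g) ⊆ SOL(A)}. -/

import Mathlib

open Finset

variable {V : Type*} {D : Type*}

/-- A tuple `(S, k)` where `S ∈ C` is a scope and `k : D^S`. -/
abbrev Tup (C : Finset (Finset V)) (D : Type*) : Type _ :=
  (S : {S : Finset V // S ∈ C}) × ({v : V // v ∈ S.1} → D)

variable [Fintype V] [DecidableEq V] [Fintype D] [DecidableEq D] [Nonempty D]

/-- WCSP objective `⟨f, φ(x)⟩ = Σ_{S∈C} f_S(x[S])`. -/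
def val (C : Finset (Finset V)) (f : Tup C D → ℝ) (x : V → D) : ℝ :=
  ∑ S : {S : Finset V // S ∈ C}, f ⟨S, fun i => x i.1⟩

/-- Upper bound `B(f) = Σ_{S∈C} max_{k∈D^S} f_S(k)`. -/
noncomputable def B (C : Finset (Finset V)) (f : Tup C D → ℝ) : ℝ :=
  ∑ S : {S : Finset V // S ∈ C},
    Finset.univ.sup' Finset.univ_nonempty (fun k : {v : V // v ∈ S.1} → D => f ⟨S, k⟩)

/-- The active-tuple CSP: tuples whose weight is maximal within their scope. -/
def Astar (C : Finset (Finset V)) (f : Tup C D → ℝ) : Set (Tup C D) :=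
  {t | ∀ k : {v : V // v ∈ t.1.1} → D, f ⟨t.1, k⟩ ≤ f t}

/-- Solution set of a CSP `A ⊆ T`. -/
def SOL (C : Finset (Finset V)) (A : Set (Tup C D)) : Set (V → D) :=
  {x | ∀ S : {S : Finset V // S ∈ C}, (⟨S, fun i => x i.1⟩ : Tup C D) ∈ A}

/-- `f` is a super-reparametrization of `g`. -/
def SuperRepar (C : Finset (Finset V)) (g f : Tup C D → ℝ) : Prop :=
  ∀ x : V → D, val C g x ≤ val C f x

/-- Set of optimal assignments of WCSP `g`. -/
def OPT (C : Finset (Finset V)) (g : Tup C D → ℝ) : Set (V → D) :=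
  {x | ∀ y : V → D, val C g y ≤ val C g x}

/-- `d` is an `R`-deactivating direction for CSP `A`. -/
def Deact (C : Finset (Finset V)) (A R : Set (Tup C D)) (d : Tup C D → ℝ) : Prop :=
  (∀ x : V → D, 0 ≤ val C d x) ∧ (∀ t ∈ R, d t < 0) ∧ (∀ t ∈ A \ R, d t = 0)

/-- Minimal CSP for a set of assignments `X`. -/
def Amin (C : Finset (Finset V)) (X : Set (V → D)) : Set (Tup C D) :=
  ⋂₀ {A : Set (Tup C D) | X ⊆ SOL C A}


lemma val_le_B (C : Finset (Finset V)) (f : Tup C D → ℝ) (x : V → D) :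
    val C f x ≤ B C f :=
  Finset.sum_le_sum fun S _ =>
    Finset.le_sup' (fun k : {v : V // v ∈ S.1} → D => f ⟨S, k⟩) (Finset.mem_univ _)

theorem stmt14 (C : Finset (Finset V)) (g : Tup C D → ℝ) :
    {A : Set (Tup C D) | ∃ f : Tup C D → ℝ, SuperRepar C g f ∧
        (∀ f' : Tup C D → ℝ, SuperRepar C g f' → B C f ≤ B C f') ∧ Astar C f = A} =
      {A : Set (Tup C D) | OPT C g ⊆ SOL C A} := by
  classical
  ext A
  simp only [Set.mem_setOf_eq]
  constructor
  · rintro ⟨f, hsr, hmin, rfl⟩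
    intro x hx S k
    haveI : Nonempty {S : Finset V // S ∈ C} := ⟨S⟩
    set N : ℝ := (Fintype.card {S : Finset V // S ∈ C} : ℝ) with hNdef
    have hN : N ≠ 0 := Nat.cast_ne_zero.mpr Fintype.card_ne_zero
    set M := val C g x with hM
    have hconstval : ∀ y : V → D, val C (fun _ : Tup C D => M / N) y = M := by
      intro y
      simp only [_root_.val, Finset.sum_const, Finset.card_univ, nsmul_eq_mul, ← hNdef]
      field_simp
    have hf0 : SuperRepar C g (fun _ : Tup C D => M / N) := by
      intro y; rw [hconstval]; exact hx y
    have hB0 : B C (fun _ : Tup C D => M / N) = M := by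
      simp only [B, Finset.sup'_const, Finset.sum_const, Finset.card_univ, nsmul_eq_mul,
        ← hNdef]
      field_simp
    have hle : B C f ≤ M := hB0 ▸ hmin _ hf0
    have heq : val C f x = B C f :=
      le_antisymm (val_le_B C f x) (le_trans hle (hsr x))
    have hterm := (Finset.sum_eq_sum_iff_of_le
      (fun S' _ => Finset.le_sup' (fun k : {v : V // v ∈ S'.1} → D => f ⟨S', k⟩)
        (Finset.mem_univ _))).mp heq
    calc f ⟨S, k⟩
        ≤ Finset.univ.sup' Finset.univ_nonempty
            (fun k : {v : V // v ∈ S.1} → D => f ⟨S, k⟩) :=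
          Finset.le_sup' (fun k : {v : V // v ∈ S.1} → D => f ⟨S, k⟩) (Finset.mem_univ k)
      _ = f ⟨S, fun i => x i.1⟩ := (hterm S (Finset.mem_univ S)).symm
  · intro hA
    by_cases hne : Nonempty {S : Finset V // S ∈ C}
    · haveI := hne
      set N : ℝ := (Fintype.card {S : Finset V // S ∈ C} : ℝ) with hNdef
      have hN0 : 0 < N := by
        have h := Fintype.card_pos (α := {S : Finset V // S ∈ C})
        rw [hNdef]
        exact_mod_cast h
      obtain ⟨x₀, hx₀⟩ := Finite.exists_max (val C g)
      set M := val C g x₀ with hM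
      have hx₀A : x₀ ∈ SOL C A := hA (fun y => hx₀ y)
      have hlt : ∀ x : V → D, x ∉ SOL C A → val C g x < M := by
        intro x hx
        rcases lt_or_eq_of_le (hx₀ x) with h | h
        · exact h
        · exact absurd (hA (fun y => h ▸ hx₀ y)) hx
      have hδex : ∃ δ : ℝ, 0 < δ ∧
          ∀ x : V → D, x ∉ SOL C A → val C g x + N * δ ≤ M := by
        refine ⟨Finset.univ.inf' Finset.univ_nonempty
          (fun x : V → D => if x ∈ SOL C A then 1 else (M - val C g x) / N), ?_, ?_⟩
        · rw [Finset.lt_inf'_iff]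
          intro x _
          by_cases h : x ∈ SOL C A
          · simp [h]
          · simp only [h, if_false]
            exact div_pos (sub_pos.mpr (hlt x h)) hN0
        · intro x hx
          have h1 : Finset.univ.inf' Finset.univ_nonempty
              (fun x : V → D => if x ∈ SOL C A then 1 else (M - val C g x) / N)
              ≤ (M - val C g x) / N := by
            have := Finset.inf'_le (b := x)
              (fun x : V → D => if x ∈ SOL C A then 1 else (M - val C g x) / N)
              (Finset.mem_univ x)
            simpa only [hx, if_false, ↓reduceIte] using this
          have h2 : N * ((M - val C g x) / N) = M - val C g x := by field_simp
          nlinarith [mul_le_mul_of_nonneg_left h1 (le_of_lt hN0)]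
      obtain ⟨δ, hδ, hδle⟩ := hδex
      set f : Tup C D → ℝ := fun t => if t ∈ A then M / N else M / N - δ with hf
      have hfle : ∀ t : Tup C D, f t ≤ M / N := by
        intro t
        by_cases h : t ∈ A
        · simp [hf, h]
        · simp only [hf, h, if_false]
          linarith
      have hfge : ∀ t : Tup C D, M / N - δ ≤ f t := by
        intro t
        by_cases h : t ∈ A <;> simp [hf, h] <;> linarith
      have hsup : ∀ S : {S : Finset V // S ∈ C},
          Finset.univ.sup' Finset.univ_nonempty
            (fun k : {v : V // v ∈ S.1} → D => f ⟨S, k⟩) = M / N := by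
        intro S
        refine le_antisymm (Finset.sup'_le _ _ fun k _ => hfle _) ?_
        have := Finset.le_sup' (fun k : {v : V // v ∈ S.1} → D => f ⟨S, k⟩)
          (Finset.mem_univ (fun i => x₀ i.1))
        have hval : f ⟨S, fun i => x₀ i.1⟩ = M / N := by
          simp [hf, hx₀A S]
        rw [hval] at this
        exact this
      have hNM : N * (M / N) = M := by field_simp
      have hBf : B C f = M := by
        simp only [B, hsup, Finset.sum_const, Finset.card_univ, nsmul_eq_mul, ← hNdef]
        exact hNM
      have hsolval : ∀ x ∈ SOL C A, val C f x = M := by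
        intro x hx
        have : ∀ S : {S : Finset V // S ∈ C}, f ⟨S, fun i => x i.1⟩ = M / N := by
          intro S; simp [hf, hx S]
        simp only [_root_.val, this, Finset.sum_const, Finset.card_univ, nsmul_eq_mul, ← hNdef]
        exact hNM
      refine ⟨f, ?_, ?_, ?_⟩
      · intro x
        by_cases h : x ∈ SOL C A
        · rw [hsolval x h]; exact hx₀ x
        · have h1 : M - N * δ ≤ val C f x := by
            have : ∀ S ∈ (Finset.univ : Finset {S : Finset V // S ∈ C}),
                M / N - δ ≤ f ⟨S, fun i => x i.1⟩ := fun S _ => hfge _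
            have hsum := Finset.sum_le_sum this
            simp only [Finset.sum_const, Finset.card_univ, nsmul_eq_mul, ← hNdef] at hsum
            have : N * (M / N - δ) = M - N * δ := by rw [mul_sub, hNM]
            rw [this] at hsum
            exact hsum
          have h2 := hδle x h
          linarith
      · intro f' hf'
        rw [hBf]
        exact le_trans (hf' x₀) (val_le_B C f' x₀)
      · ext t
        simp only [Astar, Set.mem_setOf_eq]
        constructor
        · intro h
          by_contra ht
          have h1 : f t = M / N - δ := by simp [hf, ht]
          have h2 : f ⟨t.1, fun i => x₀ i.1⟩ = M / N := by simp [hf, hx₀A t.1]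
          have := h (fun i => x₀ i.1)
          rw [h1, h2] at this
          linarith
        · intro ht k
          have h1 : f t = M / N := by simp [hf, ht]
          rw [h1]
          exact hfle _
    · haveI : IsEmpty {S : Finset V // S ∈ C} := not_nonempty_iff.mp hne
      refine ⟨g, fun x => le_refl _, fun f' _ => ?_, ?_⟩
      · simp [B, Finset.univ_eq_empty]
      · ext t
        exact isEmptyElim t.1
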